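/- arXiv:2301.05414 — 4 statements merged into one kernel-verified Lean document; each statement's English description precedes it below -/
import Mathlib

section
/- Let k, p be nonzero real constants and let U = {(x,y) ∈ ℝ² : (ky+px)(py−kx) ≠ 0}. Consider the symmetric connection on U whose only nonzero coefficients are Γ¹₁₁ = p/(ky+px) and Γ²₂₂ = p/(py−kx). Then: (a) the vector field L_a = (ky+px, py−kx) is a generalized Killing vector of this connection, i.e. L_{1,x} − L₁Γ¹₁₁ = 0, L_{2,y} − L₂Γ²₂₂ = 0, and L_{1,y} + L_{2,x} = 0 on U; (b) ∂Γ¹₁₁/∂y = −kp/(ky+px)² and ∂Γ²₂₂/∂x = kp/(py−kx)² are nowhere equal on U, so the connection is non-Riemannian. -/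
noncomputable section
open scoped BigOperators
open Topology Filter

/-- Partial derivative `∂f/∂x` on `ℝ²`. -/
def pdx (f : ℝ × ℝ → ℝ) (z : ℝ × ℝ) : ℝ := fderiv ℝ f z (1, 0)

/-- Partial derivative `∂f/∂y` on `ℝ²`. -/
def pdy (f : ℝ × ℝ → ℝ) (z : ℝ × ℝ) : ℝ := fderiv ℝ f z (0, 1)

/-- Partial derivative `∂f/∂q^c` on `ℝ²`, `c : Fin 2`. -/
def pd2 (c : Fin 2) (f : ℝ × ℝ → ℝ) (z : ℝ × ℝ) : ℝ :=
  if c = 0 then pdx f z else pdy f z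

/-- The symmetric connection on `ℝ²` whose only (possibly) nonzero
coefficients are `Γ¹₁₁ = G1` and `Γ²₂₂ = G2`. -/
def conn2 (G1 G2 : ℝ × ℝ → ℝ) (z : ℝ × ℝ) (a b c : Fin 2) : ℝ :=
  if a = 0 ∧ b = 0 ∧ c = 0 then G1 z
  else if a = 1 ∧ b = 1 ∧ c = 1 then G2 z else 0

/-- `γ_{ab}` is covariantly constant on `U` with respect to `conn2 G1 G2`:
`γ_{ab,c} − γ_{db}Γ^d_{ac} − γ_{ad}Γ^d_{bc} = 0`. -/
def CovConstOn (G1 G2 : ℝ × ℝ → ℝ) (γ : ℝ × ℝ → Fin 2 → Fin 2 → ℝ)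
    (U : Set (ℝ × ℝ)) : Prop :=
  ∀ z ∈ U, ∀ a b c : Fin 2,
    pd2 c (fun w => γ w a b) z
      - (∑ d, γ z d b * conn2 G1 G2 z d a c)
      - (∑ d, γ z a d * conn2 G1 G2 z d b c) = 0

/-- `γ_{ab}` is a kinetic metric on `U` for the connection `conn2 G1 G2`:
a smooth symmetric covariantly constant matrix field with nonzero determinant.
The connection is *Riemannian* on `U` iff such a `γ` exists. -/
def IsKineticMetricOn (G1 G2 : ℝ × ℝ → ℝ) (γ : ℝ × ℝ → Fin 2 → Fin 2 → ℝ)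
    (U : Set (ℝ × ℝ)) : Prop :=
  (∀ a b, ContDiffOn ℝ (⊤ : ℕ∞) (fun z => γ z a b) U) ∧
  (∀ z a b, γ z a b = γ z b a) ∧
  CovConstOn G1 G2 γ U ∧
  ∀ z ∈ U, γ z 0 0 * γ z 1 1 - γ z 0 1 * γ z 1 0 ≠ 0

/- ### Auxiliary lemmas -/

lemma mixed_partials {f : ℝ × ℝ → ℝ} {s : Set (ℝ × ℝ)} (hs : IsOpen s)
    (hf : ContDiffOn ℝ (⊤ : ℕ∞) f s) {z : ℝ × ℝ} (hz : z ∈ s) :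
    pdx (fun w => pdy f w) z = pdy (fun w => pdx f w) z := by
  have hsn : s ∈ 𝓝 z := hs.mem_nhds hz
  have hf' : ContDiffOn ℝ (⊤ : ℕ∞) (fun w => fderiv ℝ f w) s :=
    hf.fderiv_of_isOpen hs (by exact_mod_cast le_top)
  have hd' : DifferentiableAt ℝ (fun w => fderiv ℝ f w) z :=
    ((hf'.differentiableOn (by simp)) z hz).differentiableAt hsn
  have hev : ∀ᶠ w in 𝓝 z, HasFDerivAt f (fderiv ℝ f w) w := by
    filter_upwards [hsn] with w hw
    exact (((hf.differentiableOn (by simp)) w hw).differentiableAt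
      (hs.mem_nhds hw)).hasFDerivAt
  have hsymm := second_derivative_symmetric_of_eventually hev hd'.hasFDerivAt
    ((1:ℝ), (0:ℝ)) ((0:ℝ), (1:ℝ))
  have h1 : fderiv ℝ (fun w => (fderiv ℝ f w) ((0:ℝ),(1:ℝ))) z
      = (fderiv ℝ (fun w => fderiv ℝ f w) z).flip ((0:ℝ),(1:ℝ)) := by
    rw [fderiv_clm_apply hd' (differentiableAt_const _)]
    simp
  have h2 : fderiv ℝ (fun w => (fderiv ℝ f w) ((1:ℝ),(0:ℝ))) z
      = (fderiv ℝ (fun w => fderiv ℝ f w) z).flip ((1:ℝ),(0:ℝ)) := by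
    rw [fderiv_clm_apply hd' (differentiableAt_const _)]
    simp
  simp only [pdx, pdy, h1, h2, ContinuousLinearMap.flip_apply]
  exact hsymm

lemma hasFDerivA (k p : ℝ) (z : ℝ × ℝ) :
    HasFDerivAt (fun w : ℝ × ℝ => k * w.2 + p * w.1)
      (k • ContinuousLinearMap.snd ℝ ℝ ℝ + p • ContinuousLinearMap.fst ℝ ℝ ℝ) z :=
  ((hasFDerivAt_snd).const_mul k).add ((hasFDerivAt_fst).const_mul p)

lemma hasFDerivB (k p : ℝ) (z : ℝ × ℝ) :
    HasFDerivAt (fun w : ℝ × ℝ => p * w.2 - k * w.1)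
      (p • ContinuousLinearMap.snd ℝ ℝ ℝ - k • ContinuousLinearMap.fst ℝ ℝ ℝ) z :=
  ((hasFDerivAt_snd).const_mul p).sub ((hasFDerivAt_fst).const_mul k)

lemma hasFDerivG1 (k p : ℝ) {z : ℝ × ℝ} (hz : k * z.2 + p * z.1 ≠ 0) :
    HasFDerivAt (fun w : ℝ × ℝ => p / (k * w.2 + p * w.1))
      ((p * (-((k * z.2 + p * z.1) ^ 2)⁻¹)) •
        (k • ContinuousLinearMap.snd ℝ ℝ ℝ + p • ContinuousLinearMap.fst ℝ ℝ ℝ)) z := by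
  have h1 : HasDerivAt (fun t : ℝ => p / t) (p * (-((k * z.2 + p * z.1) ^ 2)⁻¹))
      (k * z.2 + p * z.1) := by
    simpa [div_eq_mul_inv] using (hasDerivAt_inv hz).const_mul p
  exact h1.comp_hasFDerivAt z (hasFDerivA k p z)

lemma hasFDerivG2 (k p : ℝ) {z : ℝ × ℝ} (hz : p * z.2 - k * z.1 ≠ 0) :
    HasFDerivAt (fun w : ℝ × ℝ => p / (p * w.2 - k * w.1))
      ((p * (-((p * z.2 - k * z.1) ^ 2)⁻¹)) •
        (p • ContinuousLinearMap.snd ℝ ℝ ℝ - k • ContinuousLinearMap.fst ℝ ℝ ℝ)) z := by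
  have h1 : HasDerivAt (fun t : ℝ => p / t) (p * (-((p * z.2 - k * z.1) ^ 2)⁻¹))
      (p * z.2 - k * z.1) := by
    simpa [div_eq_mul_inv] using (hasDerivAt_inv hz).const_mul p
  exact h1.comp_hasFDerivAt z (hasFDerivB k p z)

lemma pdyG1 (k p : ℝ) {z : ℝ × ℝ} (hz : k * z.2 + p * z.1 ≠ 0) :
    pdy (fun w => p / (k * w.2 + p * w.1)) z = -(k * p) / (k * z.2 + p * z.1) ^ 2 := by
  simp only [pdy, (hasFDerivG1 k p hz).fderiv]
  simp [ContinuousLinearMap.smul_apply, ContinuousLinearMap.add_apply]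
  field_simp

lemma pdxG2 (k p : ℝ) {z : ℝ × ℝ} (hz : p * z.2 - k * z.1 ≠ 0) :
    pdx (fun w => p / (p * w.2 - k * w.1)) z = k * p / (p * z.2 - k * z.1) ^ 2 := by
  simp only [pdx, (hasFDerivG2 k p hz).fderiv]
  simp [ContinuousLinearMap.smul_apply, ContinuousLinearMap.sub_apply]
  field_simp

set_option maxHeartbeats 1000000 in
/-- On `U = {(x,y) : (ky+px)(py−kx) ≠ 0}` with
`Γ¹₁₁ = p/(ky+px)`, `Γ²₂₂ = p/(py−kx)`:
(a) `L = (ky+px, py−kx)` is a generalized Killing vector of the connection;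
(b) `∂Γ¹₁₁/∂y = −kp/(ky+px)²` and `∂Γ²₂₂/∂x = kp/(py−kx)²` are nowhere equal
on `U`, so the connection is non-Riemannian (no kinetic metric exists). -/
theorem stmt15 (k p : ℝ) (hk : k ≠ 0) (hp : p ≠ 0) :
    -- (a) the generalized Killing vector equations
    (∀ z ∈ {w : ℝ × ℝ | (k * w.2 + p * w.1) * (p * w.2 - k * w.1) ≠ 0},
      pdx (fun w => k * w.2 + p * w.1) z
          - (k * z.2 + p * z.1) * (p / (k * z.2 + p * z.1)) = 0 ∧
      pdy (fun w => p * w.2 - k * w.1) z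
          - (p * z.2 - k * z.1) * (p / (p * z.2 - k * z.1)) = 0 ∧
      pdy (fun w => k * w.2 + p * w.1) z + pdx (fun w => p * w.2 - k * w.1) z = 0) ∧
    -- (b) the two derivatives, and their nowhere-equality on U
    (∀ z ∈ {w : ℝ × ℝ | (k * w.2 + p * w.1) * (p * w.2 - k * w.1) ≠ 0},
      pdy (fun w => p / (k * w.2 + p * w.1)) z = -(k * p) / (k * z.2 + p * z.1) ^ 2 ∧
      pdx (fun w => p / (p * w.2 - k * w.1)) z = k * p / (p * z.2 - k * z.1) ^ 2 ∧
      pdy (fun w => p / (k * w.2 + p * w.1)) z ≠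
        pdx (fun w => p / (p * w.2 - k * w.1)) z) ∧
    -- hence the connection is non-Riemannian
    ¬ ∃ γ : ℝ × ℝ → Fin 2 → Fin 2 → ℝ,
      IsKineticMetricOn (fun w => p / (k * w.2 + p * w.1))
        (fun w => p / (p * w.2 - k * w.1)) γ
        {w : ℝ × ℝ | (k * w.2 + p * w.1) * (p * w.2 - k * w.1) ≠ 0} := by
  set S : Set (ℝ × ℝ) := {w : ℝ × ℝ | (k * w.2 + p * w.1) * (p * w.2 - k * w.1) ≠ 0} with hSdef
  have hkp : k * p ≠ 0 := mul_ne_zero hk hp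
  -- part (a)
  have parta : ∀ z ∈ S,
      pdx (fun w => k * w.2 + p * w.1) z
          - (k * z.2 + p * z.1) * (p / (k * z.2 + p * z.1)) = 0 ∧
      pdy (fun w => p * w.2 - k * w.1) z
          - (p * z.2 - k * z.1) * (p / (p * z.2 - k * z.1)) = 0 ∧
      pdy (fun w => k * w.2 + p * w.1) z + pdx (fun w => p * w.2 - k * w.1) z = 0 := by
    intro z hz
    have h1 : k * z.2 + p * z.1 ≠ 0 := left_ne_zero_of_mul hz
    have h2 : p * z.2 - k * z.1 ≠ 0 := right_ne_zero_of_mul hz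
    refine ⟨?_, ?_, ?_⟩
    · have : pdx (fun w => k * w.2 + p * w.1) z = p := by
        simp only [pdx, (hasFDerivA k p z).fderiv]; simp
      rw [this]; field_simp; ring
    · have : pdy (fun w => p * w.2 - k * w.1) z = p := by
        simp only [pdy, (hasFDerivB k p z).fderiv]; simp
      rw [this]; field_simp; ring
    · have e1 : pdy (fun w => k * w.2 + p * w.1) z = k := by
        simp only [pdy, (hasFDerivA k p z).fderiv]; simp
      have e2 : pdx (fun w => p * w.2 - k * w.1) z = -k := by
        simp only [pdx, (hasFDerivB k p z).fderiv]; simp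
      rw [e1, e2]; ring
  -- part (b)
  have partb : ∀ z ∈ S,
      pdy (fun w => p / (k * w.2 + p * w.1)) z = -(k * p) / (k * z.2 + p * z.1) ^ 2 ∧
      pdx (fun w => p / (p * w.2 - k * w.1)) z = k * p / (p * z.2 - k * z.1) ^ 2 ∧
      pdy (fun w => p / (k * w.2 + p * w.1)) z ≠
        pdx (fun w => p / (p * w.2 - k * w.1)) z := by
    intro z hz
    have h1 : k * z.2 + p * z.1 ≠ 0 := left_ne_zero_of_mul hz
    have h2 : p * z.2 - k * z.1 ≠ 0 := right_ne_zero_of_mul hz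
    have hA2 : 0 < (k * z.2 + p * z.1) ^ 2 :=
      lt_of_le_of_ne (sq_nonneg _) (Ne.symm (pow_ne_zero 2 h1))
    have hB2 : 0 < (p * z.2 - k * z.1) ^ 2 :=
      lt_of_le_of_ne (sq_nonneg _) (Ne.symm (pow_ne_zero 2 h2))
    refine ⟨pdyG1 k p h1, pdxG2 k p h2, ?_⟩
    rw [pdyG1 k p h1, pdxG2 k p h2]
    intro heq
    rw [div_eq_div_iff (ne_of_gt hA2) (ne_of_gt hB2)] at heq
    rcases lt_or_gt_of_ne hkp with hlt | hgt
    · nlinarith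
    · nlinarith
  refine ⟨parta, partb, ?_⟩
  -- part (c)
  rintro ⟨γ, hsm, hsymmγ, hcov, hdet⟩
  have hS : IsOpen S := by
    have hc : Continuous fun w : ℝ × ℝ => (k * w.2 + p * w.1) * (p * w.2 - k * w.1) := by
      fun_prop
    exact isOpen_ne_fun hc continuous_const
  -- extracted PDEs
  have hext : ∀ z ∈ S,
      (pdx (fun w => γ w 0 0) z = 2 * (γ z 0 0 * (p / (k * z.2 + p * z.1)))) ∧
      (pdy (fun w => γ w 0 0) z = 0) ∧
      (pdx (fun w => γ w 0 1) z = γ z 0 1 * (p / (k * z.2 + p * z.1))) ∧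
      (pdy (fun w => γ w 0 1) z = γ z 0 1 * (p / (p * z.2 - k * z.1))) := by
    intro z hz
    have h000 := hcov z hz 0 0 0
    have h001 := hcov z hz 0 0 1
    have h010 := hcov z hz 0 1 0
    have h011 := hcov z hz 0 1 1
    simp [pd2, conn2, Fin.sum_univ_two] at h000 h001 h010 h011
    exact ⟨by linarith, by linarith, by linarith, by linarith⟩
  -- differentiability helpers
  have hdiffγ : ∀ (a b : Fin 2), ∀ z ∈ S, DifferentiableAt ℝ (fun w => γ w a b) z := by
    intro a b z hz
    exact (((hsm a b).differentiableOn (by simp)) z hz).differentiableAt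
      (hS.mem_nhds hz)
  -- Step A : γ z 0 1 = 0 on S
  have hγ01 : ∀ z ∈ S, γ z 0 1 = 0 := by
    intro z hz
    have h1 : k * z.2 + p * z.1 ≠ 0 := left_ne_zero_of_mul hz
    have h2 : p * z.2 - k * z.1 ≠ 0 := right_ne_zero_of_mul hz
    have hA2 : 0 < (k * z.2 + p * z.1) ^ 2 :=
      lt_of_le_of_ne (sq_nonneg _) (Ne.symm (pow_ne_zero 2 h1))
    have hB2 : 0 < (p * z.2 - k * z.1) ^ 2 :=
      lt_of_le_of_ne (sq_nonneg _) (Ne.symm (pow_ne_zero 2 h2))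
    have hmix := mixed_partials hS (hsm 0 1) hz
    have hsn : S ∈ 𝓝 z := hS.mem_nhds hz
    -- left side
    have heL : (fun w => pdy (fun w' => γ w' 0 1) w)
        =ᶠ[𝓝 z] fun w => γ w 0 1 * (p / (p * w.2 - k * w.1)) := by
      filter_upwards [hsn] with w hw
      exact (hext w hw).2.2.2
    have heR : (fun w => pdx (fun w' => γ w' 0 1) w)
        =ᶠ[𝓝 z] fun w => γ w 0 1 * (p / (k * w.2 + p * w.1)) := by
      filter_upwards [hsn] with w hw
      exact (hext w hw).2.2.1
    have hdγ : DifferentiableAt ℝ (fun w => γ w 0 1) z := hdiffγ 0 1 z hz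
    have hdG1 : DifferentiableAt ℝ (fun w : ℝ × ℝ => p / (k * w.2 + p * w.1)) z :=
      (hasFDerivG1 k p h1).differentiableAt
    have hdG2 : DifferentiableAt ℝ (fun w : ℝ × ℝ => p / (p * w.2 - k * w.1)) z :=
      (hasFDerivG2 k p h2).differentiableAt
    have hL : pdx (fun w => pdy (fun w' => γ w' 0 1) w) z
        = γ z 0 1 * (k * p / (p * z.2 - k * z.1) ^ 2)
          + (p / (p * z.2 - k * z.1)) * (γ z 0 1 * (p / (k * z.2 + p * z.1))) := by
      have := heL.fderiv_eq (𝕜 := ℝ)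
      simp only [pdx, this, fderiv_fun_mul hdγ hdG2]
      simp only [ContinuousLinearMap.add_apply, ContinuousLinearMap.smul_apply, smul_eq_mul]
      rw [show (fderiv ℝ (fun w : ℝ × ℝ => p / (p * w.2 - k * w.1)) z) (1, 0)
            = pdx (fun w : ℝ × ℝ => p / (p * w.2 - k * w.1)) z from rfl,
          show (fderiv ℝ (fun w => γ w 0 1) z) (1, 0) = pdx (fun w => γ w 0 1) z from rfl,
          pdxG2 k p h2, (hext z hz).2.2.1]
    have hR : pdy (fun w => pdx (fun w' => γ w' 0 1) w) z
        = γ z 0 1 * (-(k * p) / (k * z.2 + p * z.1) ^ 2)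
          + (p / (k * z.2 + p * z.1)) * (γ z 0 1 * (p / (p * z.2 - k * z.1))) := by
      have := heR.fderiv_eq (𝕜 := ℝ)
      simp only [pdy, this, fderiv_fun_mul hdγ hdG1]
      simp only [ContinuousLinearMap.add_apply, ContinuousLinearMap.smul_apply, smul_eq_mul]
      rw [show (fderiv ℝ (fun w : ℝ × ℝ => p / (k * w.2 + p * w.1)) z) (0, 1)
            = pdy (fun w : ℝ × ℝ => p / (k * w.2 + p * w.1)) z from rfl,
          show (fderiv ℝ (fun w => γ w 0 1) z) (0, 1) = pdy (fun w => γ w 0 1) z from rfl,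
          pdyG1 k p h1, (hext z hz).2.2.2]
    rw [hL, hR] at hmix
    have hfac : γ z 0 1 * (k * p / (p * z.2 - k * z.1) ^ 2 + k * p / (k * z.2 + p * z.1) ^ 2)
        = 0 := by linear_combination hmix
    have hfac2 : k * p / (p * z.2 - k * z.1) ^ 2 + k * p / (k * z.2 + p * z.1) ^ 2 ≠ 0 := by
      intro h0
      rw [div_add_div _ _ (ne_of_gt hB2) (ne_of_gt hA2), div_eq_zero_iff] at h0
      rcases h0 with h0 | h0
      · have hsum : k * p * ((p * z.2 - k * z.1) ^ 2 + (k * z.2 + p * z.1) ^ 2) = 0 := by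
          linarith
        rcases mul_eq_zero.1 hsum with h | h
        · exact hkp h
        · nlinarith
      · rcases mul_eq_zero.1 h0 with h | h
        · exact (ne_of_gt hB2) h
        · exact (ne_of_gt hA2) h
    exact (mul_eq_zero.1 hfac).resolve_right hfac2
  -- Step B : contradiction at z₀ = (1, 0)
  have hz0 : ((1:ℝ), (0:ℝ)) ∈ S := by
    simp only [hSdef, Set.mem_setOf_eq]
    intro h
    rw [mul_eq_zero] at h
    rcases h with h | h <;> simp at h <;> tauto
  set z₀ : ℝ × ℝ := ((1:ℝ), (0:ℝ)) with hz₀def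
  have h1 : k * z₀.2 + p * z₀.1 ≠ 0 := left_ne_zero_of_mul hz0
  have hA2 : 0 < (k * z₀.2 + p * z₀.1) ^ 2 :=
    lt_of_le_of_ne (sq_nonneg _) (Ne.symm (pow_ne_zero 2 h1))
  have hg00 : γ z₀ 0 0 ≠ 0 := by
    have hd := hdet z₀ hz0
    rw [hγ01 z₀ hz0] at hd
    simp at hd
    exact hd.1
  have hmix := mixed_partials hS (hsm 0 0) hz0
  have hsn : S ∈ 𝓝 z₀ := hS.mem_nhds hz0
  have heL : (fun w => pdy (fun w' => γ w' 0 0) w) =ᶠ[𝓝 z₀] fun _ => (0:ℝ) := by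
    filter_upwards [hsn] with w hw
    exact (hext w hw).2.1
  have heR : (fun w => pdx (fun w' => γ w' 0 0) w)
      =ᶠ[𝓝 z₀] fun w => 2 * (γ w 0 0 * (p / (k * w.2 + p * w.1))) := by
    filter_upwards [hsn] with w hw
    exact (hext w hw).1
  have hdγ : DifferentiableAt ℝ (fun w => γ w 0 0) z₀ := hdiffγ 0 0 z₀ hz0
  have hdG1 : DifferentiableAt ℝ (fun w : ℝ × ℝ => p / (k * w.2 + p * w.1)) z₀ :=
    (hasFDerivG1 k p h1).differentiableAt
  have hL : pdx (fun w => pdy (fun w' => γ w' 0 0) w) z₀ = 0 := by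
    have := heL.fderiv_eq (𝕜 := ℝ)
    simp only [pdx, this, fderiv_fun_const]
    simp
  have hR : pdy (fun w => pdx (fun w' => γ w' 0 0) w) z₀
      = 2 * (γ z₀ 0 0 * (-(k * p) / (k * z₀.2 + p * z₀.1) ^ 2)) := by
    have := heR.fderiv_eq (𝕜 := ℝ)
    simp only [pdy, this]
    rw [fderiv_const_mul (a := fun w => γ w 0 0 * (p / (k * w.2 + p * w.1))) (hdγ.mul hdG1) 2]
    simp only [ContinuousLinearMap.smul_apply, smul_eq_mul]
    rw [fderiv_fun_mul hdγ hdG1]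
    simp only [ContinuousLinearMap.add_apply, ContinuousLinearMap.smul_apply, smul_eq_mul]
    rw [show (fderiv ℝ (fun w : ℝ × ℝ => p / (k * w.2 + p * w.1)) z₀) (0, 1)
          = pdy (fun w : ℝ × ℝ => p / (k * w.2 + p * w.1)) z₀ from rfl,
        show (fderiv ℝ (fun w => γ w 0 0) z₀) (0, 1) = pdy (fun w => γ w 0 0) z₀ from rfl,
        pdyG1 k p h1, (hext z₀ hz0).2.1]
    ring
  rw [hL, hR] at hmix
  have : γ z₀ 0 0 * (k * p) = 0 := by
    have h2' : -(k * p) / (k * z₀.2 + p * z₀.1) ^ 2 ≠ 0 ∨ γ z₀ 0 0 * (k * p) = 0 := by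
      by_cases hc : γ z₀ 0 0 * (k * p) = 0
      · right; exact hc
      · left
        intro h0
        rw [div_eq_zero_iff] at h0
        rcases h0 with h0 | h0
        · exact hkp (by linarith)
        · exact (ne_of_gt hA2) h0
    rcases h2' with hne | h0
    · have := hmix.symm
      have hfac : γ z₀ 0 0 * (-(k * p) / (k * z₀.2 + p * z₀.1) ^ 2) = 0 := by linarith
      rcases mul_eq_zero.1 hfac with h | h
      · exact absurd h hg00
      · exact absurd h hne
    · exact h0
  exact hkp ((mul_eq_zero.1 this).resolve_left hg00)
end
end

section
/- Let k, p be nonzero real constants. Along every C² solution t ↦ (x(t), y(t)) of the system ẍ = −kx + py − (p/(ky+px)) ẋ², ÿ = −ky − px − (p/(py−kx)) ẏ², defined on a time interval on which (ky+px)(py−kx) ≠ 0, the quantity I₁ = (ky+px) ẋ + (py−kx) ẏ is constant. -/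
noncomputable section

/-- Along every C² solution of the coupled-oscillator system
with non-Riemannian quadratic damping
`ẍ = −kx + py − (p/(ky+px)) ẋ²`, `ÿ = −ky − px − (p/(py−kx)) ẏ²`,
defined on a time interval on which `(ky+px)(py−kx) ≠ 0`, the quantity
`I₁ = (ky+px) ẋ + (py−kx) ẏ` is constant. -/
theorem stmt16 (k p : ℝ) (hk : k ≠ 0) (hp : p ≠ 0) (a b : ℝ)
    (x y x' y' : ℝ → ℝ)
    (hne : ∀ t ∈ Set.Ioo a b, (k * y t + p * x t) * (p * y t - k * x t) ≠ 0)
    (hx : ∀ t ∈ Set.Ioo a b, HasDerivAt x (x' t) t)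
    (hy : ∀ t ∈ Set.Ioo a b, HasDerivAt y (y' t) t)
    (hx' : ∀ t ∈ Set.Ioo a b, HasDerivAt x'
      (-(k * x t) + p * y t - p / (k * y t + p * x t) * (x' t) ^ 2) t)
    (hy' : ∀ t ∈ Set.Ioo a b, HasDerivAt y'
      (-(k * y t) - p * x t - p / (p * y t - k * x t) * (y' t) ^ 2) t) :
    ∀ t₁ ∈ Set.Ioo a b, ∀ t₂ ∈ Set.Ioo a b,
      (k * y t₁ + p * x t₁) * x' t₁ + (p * y t₁ - k * x t₁) * y' t₁ =
      (k * y t₂ + p * x t₂) * x' t₂ + (p * y t₂ - k * x t₂) * y' t₂ := by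
  set I : ℝ → ℝ :=
    fun t => (k * y t + p * x t) * x' t + (p * y t - k * x t) * y' t with hI
  have key : ∀ t ∈ Set.Ioo a b, HasDerivAt I 0 t := by
    intro t ht
    have h1 := hne t ht
    have hA : k * y t + p * x t ≠ 0 := left_ne_zero_of_mul h1
    have hB : p * y t - k * x t ≠ 0 := right_ne_zero_of_mul h1
    have hdA : HasDerivAt (fun s => k * y s + p * x s)
        (k * y' t + p * x' t) t :=
      ((hy t ht).const_mul k).add ((hx t ht).const_mul p)
    have hdB : HasDerivAt (fun s => p * y s - k * x s)
        (p * y' t - k * x' t) t :=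
      ((hy t ht).const_mul p).sub ((hx t ht).const_mul k)
    have hd : HasDerivAt I
        ((k * y' t + p * x' t) * x' t +
          (k * y t + p * x t) *
            (-(k * x t) + p * y t - p / (k * y t + p * x t) * (x' t) ^ 2) +
        ((p * y' t - k * x' t) * y' t +
          (p * y t - k * x t) *
            (-(k * y t) - p * x t - p / (p * y t - k * x t) * (y' t) ^ 2))) t :=
      (hdA.mul (hx' t ht)).add (hdB.mul (hy' t ht))
    convert hd using 1
    field_simp
    ring
  intro t₁ ht₁ t₂ ht₂
  have main : ∀ s₁ ∈ Set.Ioo a b, ∀ s₂ ∈ Set.Ioo a b, s₁ < s₂ → I s₁ = I s₂ := by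
    intro s₁ hs₁ s₂ hs₂ hlt
    have hsub : Set.Icc s₁ s₂ ⊆ Set.Ioo a b := by
      intro u hu
      exact ⟨lt_of_lt_of_le hs₁.1 hu.1, lt_of_le_of_lt hu.2 hs₂.2⟩
    have hcont : ContinuousOn I (Set.Icc s₁ s₂) := fun u hu =>
      ((key u (hsub hu)).continuousAt).continuousWithinAt
    have hderiv : ∀ u ∈ Set.Ioo s₁ s₂, HasDerivAt I 0 u := fun u hu =>
      key u (hsub (Set.Ioo_subset_Icc_self hu))
    obtain ⟨c, hc, hc'⟩ := exists_hasDerivAt_eq_slope I (fun _ => 0) hlt hcont hderiv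
    have : I s₂ - I s₁ = 0 := by
      have h2 : (I s₂ - I s₁) / (s₂ - s₁) = 0 := hc'.symm
      have h3 : s₂ - s₁ ≠ 0 := sub_ne_zero.mpr hlt.ne'
      field_simp at h2
      linarith [h2]
    linarith [this]
  rcases lt_trichotomy t₁ t₂ with h | h | h
  · exact main t₁ ht₁ t₂ ht₂ h
  · rw [h]
  · exact (main t₂ ht₂ t₁ ht₁ h).symm
end
end

section
/- Let β ≠ 0 be a real constant. Along every C² solution t ↦ (u(t), w(t)) with u(t) > 0 of the system ü = −(8β/u³)(u u̇ ẇ − w u̇²) − 1/u², ẅ = −(4β/u³)(u ẇ² − 4w u̇ ẇ) + 2w/u³, the quantity I = e^{12βw/u²} ( u̇ ẇ + 1/(12β) ) is constant, i.e. I is a quadratic first integral of this non-Riemannian dynamical system. -/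
noncomputable section

/-- Along every C² solution with `u > 0` of the
non-Riemannian system
`ü = −(8β/u³)(u u̇ ẇ − w u̇²) − 1/u²`,
`ẅ = −(4β/u³)(u ẇ² − 4w u̇ ẇ) + 2w/u³`,
the quantity `I = e^{12βw/u²}(u̇ ẇ + 1/(12β))` is constant, i.e. `I` is a
quadratic first integral of the system. -/
theorem stmt17 (β : ℝ) (hβ : β ≠ 0) (a b : ℝ)
    (u w u' w' : ℝ → ℝ)
    (hu : ∀ t ∈ Set.Ioo a b, 0 < u t)
    (hud : ∀ t ∈ Set.Ioo a b, HasDerivAt u (u' t) t)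
    (hwd : ∀ t ∈ Set.Ioo a b, HasDerivAt w (w' t) t)
    (hu' : ∀ t ∈ Set.Ioo a b, HasDerivAt u'
      (-(8 * β / (u t) ^ 3) * (u t * u' t * w' t - w t * (u' t) ^ 2) - 1 / (u t) ^ 2) t)
    (hw' : ∀ t ∈ Set.Ioo a b, HasDerivAt w'
      (-(4 * β / (u t) ^ 3) * (u t * (w' t) ^ 2 - 4 * w t * u' t * w' t) + 2 * w t / (u t) ^ 3) t) :
    ∀ t₁ ∈ Set.Ioo a b, ∀ t₂ ∈ Set.Ioo a b,
      Real.exp (12 * β * w t₁ / (u t₁) ^ 2) * (u' t₁ * w' t₁ + 1 / (12 * β)) =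
      Real.exp (12 * β * w t₂ / (u t₂) ^ 2) * (u' t₂ * w' t₂ + 1 / (12 * β)) := by
  set F : ℝ → ℝ := fun t => Real.exp (12 * β * w t / (u t) ^ 2) * (u' t * w' t + 1 / (12 * β))
    with hF
  have key : ∀ t ∈ Set.Ioo a b, HasDerivAt F 0 t := by
    intro t ht
    have hut : u t ≠ 0 := (hu t ht).ne'
    have hφ : HasDerivAt (fun s => 12 * β * w s / (u s) ^ 2)
        ((12 * β * w' t * (u t) ^ 2 - 12 * β * w t * (2 * u t ^ 1 * u' t)) / ((u t) ^ 2) ^ 2) t := by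
      have h1 : HasDerivAt (fun s => 12 * β * w s) (12 * β * w' t) t :=
        (hwd t ht).const_mul _
      have h2 : HasDerivAt (fun s => (u s) ^ 2) ((2 : ℕ) * u t ^ 1 * u' t) t :=
        (hud t ht).pow 2
      have := h1.div h2 (pow_ne_zero 2 hut)
      simpa [Pi.div_def] using this
    have hmul : HasDerivAt (fun s => u' s * w' s + 1 / (12 * β))
        ((-(8 * β / (u t) ^ 3) * (u t * u' t * w' t - w t * (u' t) ^ 2) - 1 / (u t) ^ 2) * w' t
          + u' t * (-(4 * β / (u t) ^ 3) * (u t * (w' t) ^ 2 - 4 * w t * u' t * w' t)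
            + 2 * w t / (u t) ^ 3)) t :=
      ((hu' t ht).mul (hw' t ht)).add_const _
    have hD := (hφ.exp.mul hmul)
    have hzero :
        Real.exp (12 * β * w t / (u t) ^ 2) *
            ((12 * β * w' t * (u t) ^ 2 - 12 * β * w t * (2 * u t ^ 1 * u' t)) / ((u t) ^ 2) ^ 2) *
            (u' t * w' t + 1 / (12 * β)) +
          Real.exp (12 * β * w t / (u t) ^ 2) *
            ((-(8 * β / (u t) ^ 3) * (u t * u' t * w' t - w t * (u' t) ^ 2) - 1 / (u t) ^ 2) * w' t
              + u' t * (-(4 * β / (u t) ^ 3) * (u t * (w' t) ^ 2 - 4 * w t * u' t * w' t)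
                + 2 * w t / (u t) ^ 3)) = 0 := by
      field_simp
      ring
    rw [hF]
    have : (0:ℝ) = Real.exp (12 * β * w t / (u t) ^ 2) *
            ((12 * β * w' t * (u t) ^ 2 - 12 * β * w t * (2 * u t ^ 1 * u' t)) / ((u t) ^ 2) ^ 2) *
            (u' t * w' t + 1 / (12 * β)) +
          Real.exp (12 * β * w t / (u t) ^ 2) *
            ((-(8 * β / (u t) ^ 3) * (u t * u' t * w' t - w t * (u' t) ^ 2) - 1 / (u t) ^ 2) * w' t
              + u' t * (-(4 * β / (u t) ^ 3) * (u t * (w' t) ^ 2 - 4 * w t * u' t * w' t)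
                + 2 * w t / (u t) ^ 3)) := hzero.symm
    rw [this]
    exact hD
  have main : ∀ s₁ ∈ Set.Ioo a b, ∀ s₂ ∈ Set.Ioo a b, s₁ < s₂ → F s₁ = F s₂ := by
    intro s₁ hs₁ s₂ hs₂ hlt
    have hsub : Set.Icc s₁ s₂ ⊆ Set.Ioo a b := fun x hx =>
      ⟨lt_of_lt_of_le hs₁.1 hx.1, lt_of_le_of_lt hx.2 hs₂.2⟩
    have hcont : ContinuousOn F (Set.Icc s₁ s₂) := fun x hx =>
      ((key x (hsub hx)).continuousAt).continuousWithinAt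
    have hdiff : ∀ x ∈ Set.Ioo s₁ s₂, HasDerivAt F 0 x := fun x hx =>
      key x (hsub (Set.mem_Icc_of_Ioo hx))
    obtain ⟨c, hc, hceq⟩ := exists_hasDerivAt_eq_slope F (fun _ => 0) hlt hcont hdiff
    have hne : s₂ - s₁ ≠ 0 := sub_ne_zero.mpr hlt.ne'
    have h0 := hceq.symm
    rw [div_eq_iff hne] at h0
    linarith
  intro t₁ ht₁ t₂ ht₂
  rcases lt_trichotomy t₁ t₂ with h | h | h
  · exact main t₁ ht₁ t₂ ht₂ h
  · rw [h]
  · exact (main t₂ ht₂ t₁ ht₁ h).symm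
end
end

section
/- Let λ ≠ 0 and k, c₁, c₂ be real constants, let R = √(x²+y²), and consider the Newtonian system in E³ given by ẍ = −∂V/∂x, ÿ = −∂V/∂y, z̈ = −∂V/∂z for the potential V(x,y,z) = −(λ²/2)R² + kx/(y²R) + c₁/y² − (λ²/8)z² + c₂/z². Then along every C² solution defined on a time interval on which y ≠ 0, z ≠ 0 and R ≠ 0, each of the following five quantities is constant (with M₃ = xẏ − yẋ): I₁ = (1/2)(ẋ²+ẏ²+ż²) + V; I₂ = (1/2)M₃² + (kR + c₁x)x/y²; I₃ = (1/2)ż² − (λ²/8)z² + c₂/z²; I₄ = e^{λt}[ M₃(ẏ − λy) + 2c₁x/y² + k(y² + 2x²)/(y²R) ]; I₅ = e^{λt}[ (ż − (λ/2)z)² + 2c₂/z² ]. -/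
noncomputable section

/-- The superintegrable potential
`V = −(λ²/2)R² + kx/(y²R) + c₁/y² − (λ²/8)z² + c₂/z²` with `R = √(x²+y²)`. -/
def V18 (lam k c₁ c₂ : ℝ) (X Y Z : ℝ) : ℝ :=
  -(lam ^ 2 / 2) * (X ^ 2 + Y ^ 2) + k * X / (Y ^ 2 * Real.sqrt (X ^ 2 + Y ^ 2))
    + c₁ / Y ^ 2 - lam ^ 2 / 8 * Z ^ 2 + c₂ / Z ^ 2

lemma derivVx (lam k c₁ c₂ X Y Z : ℝ) (hY : Y ≠ 0) (hR : Real.sqrt (X ^ 2 + Y ^ 2) ≠ 0) :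
    deriv (fun s => V18 lam k c₁ c₂ s Y Z) X
      = -(lam ^ 2 * X) + k / (Real.sqrt (X ^ 2 + Y ^ 2)) ^ 3 := by
  have h0 : X ^ 2 + Y ^ 2 ≠ 0 := by
    intro h; exact hR (by rw [h, Real.sqrt_zero])
  set R := Real.sqrt (X ^ 2 + Y ^ 2) with hRdef
  have hr2 : R ^ 2 = X ^ 2 + Y ^ 2 := Real.sq_sqrt (by positivity)
  have h1 : HasDerivAt (fun s => s ^ 2 + Y ^ 2) (2 * X) X := by
    simpa using (hasDerivAt_pow 2 X).add_const (Y ^ 2)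
  have hs : HasDerivAt (fun s => Real.sqrt (s ^ 2 + Y ^ 2)) (X / R) X := by
    have := (Real.hasDerivAt_sqrt h0).comp X h1
    refine (this).congr_deriv (Eq.symm ?_)
    rw [hRdef]; field_simp
  have hden : HasDerivAt (fun s => Y ^ 2 * Real.sqrt (s ^ 2 + Y ^ 2)) (Y ^ 2 * (X / R)) X :=
    hs.const_mul (Y ^ 2)
  have hnum : HasDerivAt (fun s => k * s) k X := by
    simpa using (hasDerivAt_id X).const_mul k
  have hden0 : Y ^ 2 * R ≠ 0 := mul_ne_zero (pow_ne_zero 2 hY) hR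
  have hq : HasDerivAt (fun s => k * s / (Y ^ 2 * Real.sqrt (s ^ 2 + Y ^ 2)))
      ((k * (Y ^ 2 * R) - k * X * (Y ^ 2 * (X / R))) / (Y ^ 2 * R) ^ 2) X :=
    hnum.div hden hden0
  have hA : HasDerivAt (fun s => -(lam ^ 2 / 2) * (s ^ 2 + Y ^ 2)) (-(lam ^ 2 / 2) * (2 * X)) X :=
    h1.const_mul _
  have hV : HasDerivAt (fun s => V18 lam k c₁ c₂ s Y Z)
      (-(lam ^ 2 / 2) * (2 * X) + (k * (Y ^ 2 * R) - k * X * (Y ^ 2 * (X / R))) / (Y ^ 2 * R) ^ 2) X := by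
    simp only [V18]
    exact (((hA.add hq).add_const (c₁ / Y ^ 2)).sub_const (lam ^ 2 / 8 * Z ^ 2)).add_const (c₂ / Z ^ 2)
  rw [hV.deriv]
  field_simp
  ring_nf
  linear_combination k * hr2

lemma derivVy (lam k c₁ c₂ X Y Z : ℝ) (hY : Y ≠ 0) (hR : Real.sqrt (X ^ 2 + Y ^ 2) ≠ 0) :
    deriv (fun s => V18 lam k c₁ c₂ X s Z) Y
      = -(lam ^ 2 * Y) - k * X * (2 * (X ^ 2 + Y ^ 2) + Y ^ 2)
          / (Y ^ 3 * (Real.sqrt (X ^ 2 + Y ^ 2)) ^ 3) - 2 * c₁ / Y ^ 3 := by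
  have h0 : X ^ 2 + Y ^ 2 ≠ 0 := by
    intro h; exact hR (by rw [h, Real.sqrt_zero])
  set R := Real.sqrt (X ^ 2 + Y ^ 2) with hRdef
  have hr2 : R ^ 2 = X ^ 2 + Y ^ 2 := Real.sq_sqrt (by positivity)
  have h1 : HasDerivAt (fun s => X ^ 2 + s ^ 2) (2 * Y) Y := by
    simpa using ((hasDerivAt_pow 2 Y).const_add (X ^ 2))
  have hs : HasDerivAt (fun s => Real.sqrt (X ^ 2 + s ^ 2)) (Y / R) Y := by
    have := (Real.hasDerivAt_sqrt h0).comp Y h1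
    refine (this).congr_deriv (Eq.symm ?_)
    rw [hRdef]; field_simp
  have hden : HasDerivAt (fun s => s ^ 2 * Real.sqrt (X ^ 2 + s ^ 2))
      (2 * Y ^ 1 * R + Y ^ 2 * (Y / R)) Y := by
    exact ((hasDerivAt_pow 2 Y).mul hs).congr_deriv (by norm_num [hRdef])
  have hden0 : Y ^ 2 * R ≠ 0 := mul_ne_zero (pow_ne_zero 2 hY) hR
  have hq : HasDerivAt (fun s => k * X / (s ^ 2 * Real.sqrt (X ^ 2 + s ^ 2)))
      ((0 * (Y ^ 2 * R) - k * X * (2 * Y ^ 1 * R + Y ^ 2 * (Y / R))) / (Y ^ 2 * R) ^ 2) Y :=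
    (hasDerivAt_const Y (k * X)).div hden hden0
  have hc : HasDerivAt (fun s : ℝ => c₁ / s ^ 2)
      ((0 * Y ^ 2 - c₁ * (2 * Y ^ 1)) / (Y ^ 2) ^ 2) Y :=
    (hasDerivAt_const Y c₁).div (hasDerivAt_pow 2 Y) (pow_ne_zero 2 hY)
  have hA : HasDerivAt (fun s => -(lam ^ 2 / 2) * (X ^ 2 + s ^ 2)) (-(lam ^ 2 / 2) * (2 * Y)) Y :=
    h1.const_mul _
  have hV : HasDerivAt (fun s => V18 lam k c₁ c₂ X s Z)
      (-(lam ^ 2 / 2) * (2 * Y) + (0 * (Y ^ 2 * R) - k * X * (2 * Y ^ 1 * R + Y ^ 2 * (Y / R))) / (Y ^ 2 * R) ^ 2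
        + (0 * Y ^ 2 - c₁ * (2 * Y ^ 1)) / (Y ^ 2) ^ 2) Y := by
    simp only [V18]
    exact (((hA.add hq).add hc).sub_const (lam ^ 2 / 8 * Z ^ 2)).add_const (c₂ / Z ^ 2)
  rw [hV.deriv]
  field_simp
  ring_nf
  linear_combination (-2 * k * X) * hr2

lemma derivVz (lam k c₁ c₂ X Y Z : ℝ) (hZ : Z ≠ 0) :
    deriv (fun s => V18 lam k c₁ c₂ X Y s) Z = -(lam ^ 2 / 4 * Z) - 2 * c₂ / Z ^ 3 := by
  have hA : HasDerivAt (fun s : ℝ => lam ^ 2 / 8 * s ^ 2) (lam ^ 2 / 8 * (2 * Z ^ 1)) Z :=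
    (hasDerivAt_pow 2 Z).const_mul _
  have hc : HasDerivAt (fun s : ℝ => c₂ / s ^ 2)
      ((0 * Z ^ 2 - c₂ * (2 * Z ^ 1)) / (Z ^ 2) ^ 2) Z :=
    (hasDerivAt_const Z c₂).div (hasDerivAt_pow 2 Z) (pow_ne_zero 2 hZ)
  have hV : HasDerivAt (fun s => V18 lam k c₁ c₂ X Y s)
      (0 + 0 + 0 - lam ^ 2 / 8 * (2 * Z ^ 1) + (0 * Z ^ 2 - c₂ * (2 * Z ^ 1)) / (Z ^ 2) ^ 2) Z := by
    simp only [V18]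
    exact ((((hasDerivAt_const Z _).add (hasDerivAt_const Z _)).add
      (hasDerivAt_const Z _)).sub hA).add hc
  rw [hV.deriv]
  field_simp
  ring

lemma constIoo {a b : ℝ} {F : ℝ → ℝ}
    (h : ∀ t ∈ Set.Ioo a b, HasDerivAt F 0 t) :
    ∀ t₁ ∈ Set.Ioo a b, ∀ t₂ ∈ Set.Ioo a b, F t₁ = F t₂ := by
  intro t₁ h₁ t₂ h₂
  refine (convex_Ioo a b).is_const_of_fderivWithin_eq_zero
    (fun t ht => (h t ht).differentiableAt.differentiableWithinAt) (fun t ht => ?_) h₁ h₂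
  rw [fderivWithin_eq_fderiv (isOpen_Ioo.uniqueDiffWithinAt ht) (h t ht).differentiableAt,
    (h t ht).hasFDerivAt.fderiv]
  ext
  simp

set_option maxHeartbeats 1000000 in
/-- Along every C² solution of the Newtonian system
`q̈^a = −∂V/∂q^a` in `E³` for the potential `V18` (on an interval where
`y ≠ 0`, `z ≠ 0`, `R ≠ 0`), the five quantities `I₁,…,I₅` are constant. -/
theorem stmt18 (lam k c₁ c₂ : ℝ) (hlam : lam ≠ 0) (a b : ℝ)
    (x y z x' y' z' : ℝ → ℝ)
    (hreg : ∀ t ∈ Set.Ioo a b,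
      y t ≠ 0 ∧ z t ≠ 0 ∧ Real.sqrt ((x t) ^ 2 + (y t) ^ 2) ≠ 0)
    (hx : ∀ t ∈ Set.Ioo a b, HasDerivAt x (x' t) t)
    (hy : ∀ t ∈ Set.Ioo a b, HasDerivAt y (y' t) t)
    (hz : ∀ t ∈ Set.Ioo a b, HasDerivAt z (z' t) t)
    (hx' : ∀ t ∈ Set.Ioo a b, HasDerivAt x'
      (-(deriv (fun s => V18 lam k c₁ c₂ s (y t) (z t)) (x t))) t)
    (hy' : ∀ t ∈ Set.Ioo a b, HasDerivAt y'
      (-(deriv (fun s => V18 lam k c₁ c₂ (x t) s (z t)) (y t))) t)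
    (hz' : ∀ t ∈ Set.Ioo a b, HasDerivAt z'
      (-(deriv (fun s => V18 lam k c₁ c₂ (x t) (y t) s) (z t))) t) :
    -- `I₁`: the Hamiltonian
    (∀ t₁ ∈ Set.Ioo a b, ∀ t₂ ∈ Set.Ioo a b,
      1 / 2 * ((x' t₁) ^ 2 + (y' t₁) ^ 2 + (z' t₁) ^ 2)
          + V18 lam k c₁ c₂ (x t₁) (y t₁) (z t₁) =
      1 / 2 * ((x' t₂) ^ 2 + (y' t₂) ^ 2 + (z' t₂) ^ 2)
          + V18 lam k c₁ c₂ (x t₂) (y t₂) (z t₂)) ∧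
    -- `I₂ = (1/2)M₃² + (kR + c₁x)x/y²`
    (∀ t₁ ∈ Set.Ioo a b, ∀ t₂ ∈ Set.Ioo a b,
      1 / 2 * (x t₁ * y' t₁ - y t₁ * x' t₁) ^ 2
          + (k * Real.sqrt ((x t₁) ^ 2 + (y t₁) ^ 2) + c₁ * x t₁) * x t₁ / (y t₁) ^ 2 =
      1 / 2 * (x t₂ * y' t₂ - y t₂ * x' t₂) ^ 2
          + (k * Real.sqrt ((x t₂) ^ 2 + (y t₂) ^ 2) + c₁ * x t₂) * x t₂ / (y t₂) ^ 2) ∧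
    -- `I₃ = (1/2)ż² − (λ²/8)z² + c₂/z²`
    (∀ t₁ ∈ Set.Ioo a b, ∀ t₂ ∈ Set.Ioo a b,
      1 / 2 * (z' t₁) ^ 2 - lam ^ 2 / 8 * (z t₁) ^ 2 + c₂ / (z t₁) ^ 2 =
      1 / 2 * (z' t₂) ^ 2 - lam ^ 2 / 8 * (z t₂) ^ 2 + c₂ / (z t₂) ^ 2) ∧
    -- `I₄ = e^{λt}[M₃(ẏ − λy) + 2c₁x/y² + k(y² + 2x²)/(y²R)]`
    (∀ t₁ ∈ Set.Ioo a b, ∀ t₂ ∈ Set.Ioo a b,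
      Real.exp (lam * t₁) *
        ((x t₁ * y' t₁ - y t₁ * x' t₁) * (y' t₁ - lam * y t₁) + 2 * c₁ * x t₁ / (y t₁) ^ 2
          + k * ((y t₁) ^ 2 + 2 * (x t₁) ^ 2) /
              ((y t₁) ^ 2 * Real.sqrt ((x t₁) ^ 2 + (y t₁) ^ 2))) =
      Real.exp (lam * t₂) *
        ((x t₂ * y' t₂ - y t₂ * x' t₂) * (y' t₂ - lam * y t₂) + 2 * c₁ * x t₂ / (y t₂) ^ 2
          + k * ((y t₂) ^ 2 + 2 * (x t₂) ^ 2) /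
              ((y t₂) ^ 2 * Real.sqrt ((x t₂) ^ 2 + (y t₂) ^ 2)))) ∧
    -- `I₅ = e^{λt}[(ż − (λ/2)z)² + 2c₂/z²]`
    (∀ t₁ ∈ Set.Ioo a b, ∀ t₂ ∈ Set.Ioo a b,
      Real.exp (lam * t₁) * ((z' t₁ - lam / 2 * z t₁) ^ 2 + 2 * c₂ / (z t₁) ^ 2) =
      Real.exp (lam * t₂) * ((z' t₂ - lam / 2 * z t₂) ^ 2 + 2 * c₂ / (z t₂) ^ 2)) := by
  
  have hy0 : ∀ t ∈ Set.Ioo a b, y t ≠ 0 := fun t ht => (hreg t ht).1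
  have hz0 : ∀ t ∈ Set.Ioo a b, z t ≠ 0 := fun t ht => (hreg t ht).2.1
  have hr0 : ∀ t ∈ Set.Ioo a b, Real.sqrt ((x t) ^ 2 + (y t) ^ 2) ≠ 0 :=
    fun t ht => (hreg t ht).2.2
  have hr2 : ∀ t ∈ Set.Ioo a b,
      (Real.sqrt ((x t) ^ 2 + (y t) ^ 2)) ^ 2 = (x t) ^ 2 + (y t) ^ 2 :=
    fun t ht => Real.sq_sqrt (by positivity)
  have hrt : ∀ t ∈ Set.Ioo a b, HasDerivAt (fun s => Real.sqrt ((x s) ^ 2 + (y s) ^ 2))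
      ((x t * x' t + y t * y' t) / Real.sqrt ((x t) ^ 2 + (y t) ^ 2)) t := by
    intro t ht
    have h0 : (x t) ^ 2 + (y t) ^ 2 ≠ 0 := by
      intro h; exact hr0 t ht (by rw [h, Real.sqrt_zero])
    have h1 : HasDerivAt (fun s => (x s) ^ 2 + (y s) ^ 2)
        (2 * x t ^ 1 * x' t + 2 * y t ^ 1 * y' t) t := ((hx t ht).pow 2).add ((hy t ht).pow 2)
    have H := (Real.hasDerivAt_sqrt h0).comp t h1
    refine (H).congr_deriv (Eq.symm ?_)
    have h2 := hr0 t ht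
    field_simp
  have hAx : ∀ t ∈ Set.Ioo a b, HasDerivAt x'
      (lam ^ 2 * x t - k / (Real.sqrt ((x t) ^ 2 + (y t) ^ 2)) ^ 3) t := by
    intro t ht
    have H := hx' t ht
    rw [derivVx lam k c₁ c₂ (x t) (y t) (z t) (hy0 t ht) (hr0 t ht)] at H
    refine (H).congr_deriv (Eq.symm ?_); ring
  have hAy : ∀ t ∈ Set.Ioo a b, HasDerivAt y'
      (lam ^ 2 * y t + k * x t * (2 * ((x t) ^ 2 + (y t) ^ 2) + (y t) ^ 2)
        / ((y t) ^ 3 * (Real.sqrt ((x t) ^ 2 + (y t) ^ 2)) ^ 3) + 2 * c₁ / (y t) ^ 3) t := by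
    intro t ht
    have H := hy' t ht
    rw [derivVy lam k c₁ c₂ (x t) (y t) (z t) (hy0 t ht) (hr0 t ht)] at H
    refine (H).congr_deriv (Eq.symm ?_); ring
  have hAz : ∀ t ∈ Set.Ioo a b, HasDerivAt z'
      (lam ^ 2 / 4 * z t + 2 * c₂ / (z t) ^ 3) t := by
    intro t ht
    have H := hz' t ht
    rw [derivVz lam k c₁ c₂ (x t) (y t) (z t) (hz0 t ht)] at H
    refine (H).congr_deriv (Eq.symm ?_); ring
  refine ⟨?_, ?_, ?_, ?_, ?_⟩
  · -- I₁
    refine constIoo fun t ht => ?_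
    have hY := hy0 t ht; have hZ := hz0 t ht; have hR := hr0 t ht; have h2 := hr2 t ht
    have hden0 : (y t) ^ 2 * Real.sqrt ((x t) ^ 2 + (y t) ^ 2) ≠ 0 :=
      mul_ne_zero (pow_ne_zero 2 hY) hR
    have hkin := ((((hAx t ht).pow 2).add ((hAy t ht).pow 2)).add
      ((hAz t ht).pow 2)).const_mul (1 / 2 : ℝ)
    have hV1 := (((hx t ht).pow 2).add ((hy t ht).pow 2)).const_mul (-(lam ^ 2 / 2))
    have hV2 := ((hx t ht).const_mul k).div (((hy t ht).pow 2).mul (hrt t ht)) hden0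
    have hV3 := (hasDerivAt_const t c₁).div ((hy t ht).pow 2) (pow_ne_zero 2 hY)
    have hV4 := ((hz t ht).pow 2).const_mul (lam ^ 2 / 8)
    have hV5 := (hasDerivAt_const t c₂).div ((hz t ht).pow 2) (pow_ne_zero 2 hZ)
    simp only [V18]
    refine (hkin.add ((((hV1.add hV2).add hV3).sub hV4).add hV5)).congr_deriv (Eq.symm ?_)
    simp only [Pi.pow_apply, Pi.mul_apply, Pi.div_apply, Pi.sub_apply, Pi.add_apply]
    field_simp
    ring_nf at h2 ⊢
    linear_combination (128 * y t * x t * z t ^ 4 * k * y' t - 64 * y t ^ 2 * z t ^ 4 * x' t * k) * h2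
  · -- I₂
    refine constIoo fun t ht => ?_
    have hY := hy0 t ht; have hR := hr0 t ht; have h2 := hr2 t ht
    have hM := ((hx t ht).mul (hAy t ht)).sub ((hy t ht).mul (hAx t ht))
    have hT1 := (hM.pow 2).const_mul (1 / 2 : ℝ)
    have hT2 := ((((hrt t ht).const_mul k).add ((hx t ht).const_mul c₁)).mul (hx t ht)).div
      ((hy t ht).pow 2) (pow_ne_zero 2 hY)
    refine (hT1.add hT2).congr_deriv (Eq.symm ?_)
    simp only [Pi.pow_apply, Pi.mul_apply, Pi.div_apply, Pi.sub_apply, Pi.add_apply]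
    field_simp
    ring_nf at h2 ⊢
    linear_combination (-(2 * y t * x t * y' t * k * (-2 * Real.sqrt (x t ^ 2 + y t ^ 2) ^ 2 + y t ^ 2 - 2 * (x t ^ 2 + y t ^ 2)) + 2 * y t ^ 2 * x' t * k * (Real.sqrt (x t ^ 2 + y t ^ 2) ^ 2 + x t ^ 2 + (x t ^ 2 + y t ^ 2)))) * h2
  · -- I₃
    refine constIoo fun t ht => ?_
    have hZ := hz0 t ht
    have hT1 := ((hAz t ht).pow 2).const_mul (1 / 2 : ℝ)
    have hT2 := ((hz t ht).pow 2).const_mul (lam ^ 2 / 8)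
    have hT3 := (hasDerivAt_const t c₂).div ((hz t ht).pow 2) (pow_ne_zero 2 hZ)
    refine ((hT1.sub hT2).add hT3).congr_deriv (Eq.symm ?_)
    simp only [Pi.pow_apply, Pi.mul_apply, Pi.div_apply, Pi.sub_apply, Pi.add_apply]
    field_simp
    ring
  · -- I₄
    refine constIoo fun t ht => ?_
    have hY := hy0 t ht; have hR := hr0 t ht; have h2 := hr2 t ht
    have hden0 : (y t) ^ 2 * Real.sqrt ((x t) ^ 2 + (y t) ^ 2) ≠ 0 :=
      mul_ne_zero (pow_ne_zero 2 hY) hR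
    have hexp : HasDerivAt (fun s => Real.exp (lam * s)) (lam * Real.exp (lam * t)) t := by
      have H := (Real.hasDerivAt_exp (lam * t)).comp t ((hasDerivAt_id t).const_mul lam)
      refine (H).congr_deriv (Eq.symm ?_); ring
    have hM := ((hx t ht).mul (hAy t ht)).sub ((hy t ht).mul (hAx t ht))
    have hG1 := hM.mul ((hAy t ht).sub ((hy t ht).const_mul lam))
    have hG2 := ((hx t ht).const_mul (2 * c₁)).div ((hy t ht).pow 2) (pow_ne_zero 2 hY)
    have hG3 := ((((hy t ht).pow 2).add (((hx t ht).pow 2).const_mul 2)).const_mul k).div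
      (((hy t ht).pow 2).mul (hrt t ht)) hden0
    refine (hexp.mul ((hG1.add hG2).add hG3)).congr_deriv (Eq.symm ?_)
    simp only [Pi.pow_apply, Pi.mul_apply, Pi.div_apply, Pi.sub_apply, Pi.add_apply]
    have he := Real.exp_ne_zero (lam * t)
    field_simp
    ring_nf at h2 ⊢
    linear_combination (-(Real.exp (lam * t) * k * (-4 * y t * x t ^ 2 * y' t + 4 * y t ^ 2 * x t * x' t + lam * (2 * y t ^ 2 * x t ^ 2 + y t ^ 4)))) * h2
  · -- I₅
    refine constIoo fun t ht => ?_
    have hZ := hz0 t ht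
    have hexp : HasDerivAt (fun s => Real.exp (lam * s)) (lam * Real.exp (lam * t)) t := by
      have H := (Real.hasDerivAt_exp (lam * t)).comp t ((hasDerivAt_id t).const_mul lam)
      refine (H).congr_deriv (Eq.symm ?_); ring
    have hG1 := (((hAz t ht).sub ((hz t ht).const_mul (lam / 2))).pow 2)
    have hG2 := (hasDerivAt_const t (2 * c₂)).div ((hz t ht).pow 2) (pow_ne_zero 2 hZ)
    refine (hexp.mul (hG1.add hG2)).congr_deriv (Eq.symm ?_)
    simp only [Pi.pow_apply, Pi.mul_apply, Pi.div_apply, Pi.sub_apply, Pi.add_apply]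
    have he := Real.exp_ne_zero (lam * t)
    field_simp
    ring
end
end
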